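/- arXiv:0705.4161 — 2 statements merged into one kernel-verified Lean document; each statement's English description precedes it below -/
import Mathlib

section
/- In the explicit setup described in the context, let R be an upper bound of ρ on [0,ε]. Then for every f ∈ L_{2,|r|}(ι), the function Sf belongs to L_{2,|r|}(ȷ) and ∫_ȷ |(Sf)(x)|² |r(x)| dx ≤ |α'|·|β'|·R·∫_ι |f(ξ)|² |r(ξ)| dξ. In particular S is a bounded linear operator with operator norm at most (|α'|·|β'|·R)^{1/2}. -/
open MeasureTheory Set Filter

noncomputable section

namespace SL

/-- The measure `|r(x)| dx` on the set `I ⊆ ℝ`; `L_{2,|r|}(I) = Lp ℂ 2 (wM r I)`. -/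
def wM (r : ℝ → ℝ) (I : Set ℝ) : Measure ℝ :=
  (volume.restrict I).withDensity fun x => ENNReal.ofReal |r x|

/-- `g` is absolutely continuous on `[a,b]` with (a.e.) derivative `g'`,
encoded via the fundamental theorem of calculus. -/
def ACOn (g g' : ℝ → ℂ) (a b : ℝ) : Prop :=
  IntervalIntegrable g' volume a b ∧
    ∀ x ∈ Set.Icc a b, g x = g a + ∫ t in a..x, g' t

/-- The function `g` belongs to `F_max([a,b])`: it is square integrable with respect to
`|r| dx` on `[a,b]` and has a representative `g₀`, absolutely continuous on `[a,b]`,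
with `∫_a^b p |g₀'|² < ∞`. -/
def InFmax (p r : ℝ → ℝ) (a b : ℝ) (g : ℝ → ℂ) : Prop :=
  MemLp g 2 (wM r (Set.Icc a b)) ∧
    ∃ g₀ g' : ℝ → ℂ, (g =ᵐ[wM r (Set.Icc a b)] g₀) ∧ ACOn g₀ g' a b ∧
      IntegrableOn (fun x => p x * ‖g' x‖ ^ 2) (Set.Icc a b)

/-- Standing assumptions on the coefficients of the Sturm–Liouville equation. -/
def Coeffs (p q r : ℝ → ℝ) : Prop :=
  IntegrableOn (fun x => 1 / p x) (Set.Icc (-1 : ℝ) 1) ∧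
  IntegrableOn q (Set.Icc (-1 : ℝ) 1) ∧
  IntegrableOn r (Set.Icc (-1 : ℝ) 1) ∧
  ∀ᵐ x ∂(volume.restrict (Set.Icc (-1 : ℝ) 1)), 0 < p x ∧ 0 < x * r x

/-- `h` is a half-neighborhood of `a` (contained in `[-1,1]`): a closed interval of
nonzero length with `a` as an endpoint. -/
def IsHalfNbhd (h : Set ℝ) (a : ℝ) : Prop :=
  (∃ c, -1 ≤ c ∧ c < a ∧ a ≤ 1 ∧ h = Set.Icc c a) ∨
  (∃ d, -1 ≤ a ∧ a < d ∧ d ≤ 1 ∧ h = Set.Icc a d)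

/-- The ordered pair of half-neighborhoods `(ha, hb)` of `a` resp. `b` is smoothly
connected with parameters `α', β', ρ0 = ρ(0)`; the affine functions are
`α t = a + α' t` and `β t = b + β' t`. -/
def SmoothlyConnectedOn (p r : ℝ → ℝ) (ha hb : Set ℝ) (a b α' β' ρ0 : ℝ) : Prop :=
  α' ≠ 0 ∧ β' ≠ 0 ∧
  ∃ (ε τ : ℝ) (ρ ϖ : ℝ → ℝ),
    0 < ε ∧ 0 < τ ∧
    (∀ t ∈ Set.Icc (0 : ℝ) ε, a + α' * t ∈ ha) ∧
    (∀ t ∈ Set.Icc (0 : ℝ) ε, b + β' * t ∈ hb) ∧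
    (∀ t ∈ Set.Icc (0 : ℝ) ε, 0 ≤ ρ t) ∧
    (∀ t ∈ Set.Icc (0 : ℝ) ε, 0 ≤ ϖ t) ∧
    ρ 0 = ρ0 ∧
    (∀ c ∈ Set.Ioc (0 : ℝ) ε, IntegrableOn (fun t => p (a + α' * t)) (Set.Icc c ε)) ∧
    (∀ c ∈ Set.Ioc (0 : ℝ) ε, IntegrableOn (fun t => p (b + β' * t)) (Set.Icc c ε)) ∧
    InFmax p r (min a (a + α' * ε)) (max a (a + α' * ε))
      (fun x => ((ρ ((x - a) / α') : ℝ) : ℂ)) ∧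
    (∀ᵐ t ∂(volume.restrict (Set.Icc (0 : ℝ) ε)), 1 / τ < ϖ t ∧ ϖ t < τ) ∧
    (∀ t ∈ Set.Ioc (0 : ℝ) ε, ρ t = |r (b + β' * t)| / |r (a + α' * t)|) ∧
    (∀ t ∈ Set.Ioc (0 : ℝ) ε, ϖ t = p (b + β' * t) / p (a + α' * t))

/-- Condition at `0`: some ordered pair of half-neighborhoods of `0` is smoothly
connected with parameters satisfying `|α₀'| ≠ |β₀'|·ρ₀(0)`. -/
def CondAt0 (p r : ℝ → ℝ) : Prop :=
  ∃ (ha hb : Set ℝ) (α' β' ρ0 : ℝ), IsHalfNbhd ha 0 ∧ IsHalfNbhd hb 0 ∧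
    SmoothlyConnectedOn p r ha hb 0 0 α' β' ρ0 ∧ |α'| ≠ |β'| * ρ0

/-- Condition at `-1`. -/
def CondAtNeg1 (p r : ℝ → ℝ) : Prop :=
  ∃ (ha hb : Set ℝ) (α' β' ρ0 : ℝ), IsHalfNbhd ha (-1) ∧ IsHalfNbhd hb (-1) ∧
    SmoothlyConnectedOn p r ha hb (-1) (-1) α' β' ρ0 ∧ |α'| ≠ |β'| * ρ0

/-- Condition at `1`. -/
def CondAt1 (p r : ℝ → ℝ) : Prop :=
  ∃ (ha hb : Set ℝ) (α' β' ρ0 : ℝ), IsHalfNbhd ha 1 ∧ IsHalfNbhd hb 1 ∧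
    SmoothlyConnectedOn p r ha hb 1 1 α' β' ρ0 ∧ |α'| ≠ |β'| * ρ0

/-- The Krein inner product `[f,g] = ∫_{-1}^1 f conj(g) r dx` on `L_{2,r}(-1,1)`. -/
def krein0 (r : ℝ → ℝ) (f g : ℝ → ℂ) : ℂ :=
  ∫ x in Set.Icc (-1 : ℝ) 1, f x * (starRingEnd ℂ) (g x) * (r x : ℂ)

end SL
namespace SL

/-- The explicit setup of Section 3: `ι = [min a a₁, max a a₁]` and
`ȷ = [min b b₁, max b b₁]` are the intervals `[-1,0]` or `[0,1]`, regarded as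
half-neighborhoods of `a` resp. `b`, smoothly connected with data
`ε, τ, α t = a + α' t, β t = b + β' t, ρ, ϖ`; the images of `α` and `β` have length
`< 1/2`; `α₁, β₁` are strictly monotonic `C¹` bijections of `[0,1]` onto `ι` resp. `ȷ`
extending `α, β`; and `φ` is a `C¹` cutoff with `φ = 1` on `[0, ε/2]`, `φ = 0` on `[ε,1]`. -/
structure Setup (p r : ℝ → ℝ) where
  a : ℝ
  a1 : ℝ
  b : ℝ
  b1 : ℝ
  hab : (a = -1 ∧ a1 = 0) ∨ (a = 0 ∧ a1 = -1) ∨ (a = 0 ∧ a1 = 1) ∨ (a = 1 ∧ a1 = 0)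
  hbb : (b = -1 ∧ b1 = 0) ∨ (b = 0 ∧ b1 = -1) ∨ (b = 0 ∧ b1 = 1) ∨ (b = 1 ∧ b1 = 0)
  ε : ℝ
  τ : ℝ
  α' : ℝ
  β' : ℝ
  ρ : ℝ → ℝ
  ϖ : ℝ → ℝ
  hε : 0 < ε
  hε1 : ε ≤ 1
  hτ : 0 < τ
  hα' : α' ≠ 0
  hβ' : β' ≠ 0
  mapsα : ∀ t ∈ Set.Icc (0 : ℝ) ε, a + α' * t ∈ Set.Icc (min a a1) (max a a1)
  mapsβ : ∀ t ∈ Set.Icc (0 : ℝ) ε, b + β' * t ∈ Set.Icc (min b b1) (max b b1)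
  ρnn : ∀ t ∈ Set.Icc (0 : ℝ) ε, 0 ≤ ρ t
  ϖnn : ∀ t ∈ Set.Icc (0 : ℝ) ε, 0 ≤ ϖ t
  intpα : ∀ c ∈ Set.Ioc (0 : ℝ) ε, IntegrableOn (fun t => p (a + α' * t)) (Set.Icc c ε)
  intpβ : ∀ c ∈ Set.Ioc (0 : ℝ) ε, IntegrableOn (fun t => p (b + β' * t)) (Set.Icc c ε)
  ρFmax : InFmax p r (min a (a + α' * ε)) (max a (a + α' * ε))
    (fun x => ((ρ ((x - a) / α') : ℝ) : ℂ))
  ϖbdd : ∀ᵐ t ∂(volume.restrict (Set.Icc (0 : ℝ) ε)), 1 / τ < ϖ t ∧ ϖ t < τ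
  ρeq : ∀ t ∈ Set.Ioc (0 : ℝ) ε, ρ t = |r (b + β' * t)| / |r (a + α' * t)|
  ϖeq : ∀ t ∈ Set.Ioc (0 : ℝ) ε, ϖ t = p (b + β' * t) / p (a + α' * t)
  lenα : |α'| * ε < 1 / 2
  lenβ : |β'| * ε < 1 / 2
  α1 : ℝ → ℝ
  β1 : ℝ → ℝ
  φ : ℝ → ℝ
  hα1C : ContDiffOn ℝ 1 α1 (Set.Icc 0 1)
  hβ1C : ContDiffOn ℝ 1 β1 (Set.Icc 0 1)
  hα1mono : StrictMonoOn α1 (Set.Icc (0 : ℝ) 1) ∨ StrictAntiOn α1 (Set.Icc (0 : ℝ) 1)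
  hβ1mono : StrictMonoOn β1 (Set.Icc (0 : ℝ) 1) ∨ StrictAntiOn β1 (Set.Icc (0 : ℝ) 1)
  hα1bij : Set.BijOn α1 (Set.Icc (0 : ℝ) 1) (Set.Icc (min a a1) (max a a1))
  hβ1bij : Set.BijOn β1 (Set.Icc (0 : ℝ) 1) (Set.Icc (min b b1) (max b b1))
  hα1eq : ∀ t ∈ Set.Icc (0 : ℝ) ε, α1 t = a + α' * t
  hβ1eq : ∀ t ∈ Set.Icc (0 : ℝ) ε, β1 t = b + β' * t
  hα1end : α1 0 = a ∧ α1 1 = a1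
  hβ1end : β1 0 = b ∧ β1 1 = b1
  hφmaps : ∀ t ∈ Set.Icc (0 : ℝ) 1, φ t ∈ Set.Icc (0 : ℝ) 1
  hφC : ContDiffOn ℝ 1 φ (Set.Icc 0 1)
  hφ1 : ∀ t ∈ Set.Icc 0 (ε / 2), φ t = 1
  hφ0 : ∀ t ∈ Set.Icc ε 1, φ t = 0

/-- The interval `ι`. -/
def Setup.iInt {p r : ℝ → ℝ} (X : Setup p r) : Set ℝ :=
  Set.Icc (min X.a X.a1) (max X.a X.a1)

/-- The interval `ȷ`. -/
def Setup.jInt {p r : ℝ → ℝ} (X : Setup p r) : Set ℝ :=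
  Set.Icc (min X.b X.b1) (max X.b X.b1)

/-- The operator `S`, `(Sf)(β₁(t)) = |α'| f(α₁(t)) φ(t)`, realized on functions via the
inverse of `β₁` (by the zero-product convention, `f` is a total function). -/
def Setup.Sf {p r : ℝ → ℝ} (X : Setup p r) (f : ℝ → ℂ) (x : ℝ) : ℂ :=
  ((|X.α'| : ℝ) : ℂ) * f (X.α1 (Function.invFunOn X.β1 (Set.Icc 0 1) x)) *
    ((X.φ (Function.invFunOn X.β1 (Set.Icc 0 1) x) : ℝ) : ℂ)

/-- The operator `S*`, `(S*g)(α₁(t)) = |β'| ρ(t) φ(t) g(β₁(t))`, realized on functions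
via the inverse of `α₁`. -/
def Setup.Tf {p r : ℝ → ℝ} (X : Setup p r) (g : ℝ → ℂ) (x : ℝ) : ℂ :=
  ((|X.β'| : ℝ) : ℂ) * ((X.ρ (Function.invFunOn X.α1 (Set.Icc 0 1) x) : ℝ) : ℂ) *
    ((X.φ (Function.invFunOn X.α1 (Set.Icc 0 1) x) : ℝ) : ℂ) *
    g (X.β1 (Function.invFunOn X.α1 (Set.Icc 0 1) x))

end SL
namespace SL


/-- Change of variables for the Lebesgue integral under an affine map. -/
theorem setLIntegral_affine_image (c d : ℝ) (hc : c ≠ 0) {s : Set ℝ} (hs : MeasurableSet s)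
    (H : ℝ → ENNReal) :
    ∫⁻ x in ((fun t => d + c * t) '' s), H x = ENNReal.ofReal |c| * ∫⁻ t in s, H (d + c * t) := by
  have hmm : Measurable (fun t : ℝ => d + c * t) :=
    (measurable_const_mul c).const_add d
  have hinj : Function.Injective (fun t : ℝ => d + c * t) := by
    intro x y h
    simp only at h
    exact mul_left_cancel₀ hc (add_left_cancel h)
  have hemb : MeasurableEmbedding (fun t : ℝ => d + c * t) := by
    have he : (fun t : ℝ => d + c * t) = (Homeomorph.addLeft d) ∘ (Homeomorph.mulLeft₀ c hc) := by
      ext t; simp [Homeomorph.mulLeft₀]; rfl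
    rw [he]
    exact ((Homeomorph.mulLeft₀ c hc).trans (Homeomorph.addLeft d)).measurableEmbedding
  have hmap : Measure.map (fun t : ℝ => d + c * t) volume
      = ENNReal.ofReal |c⁻¹| • (volume : Measure ℝ) := by
    have h0 : (fun t : ℝ => d + c * t) = (fun x : ℝ => d + x) ∘ (fun t : ℝ => c * t) := rfl
    rw [h0, ← Measure.map_map (measurable_const_add d) (measurable_const_mul c),
      Real.map_volume_mul_left hc, Measure.map_smul, map_add_left_eq_self]
  have himg : MeasurableSet ((fun t : ℝ => d + c * t) '' s) :=
    hemb.measurableSet_image.mpr hs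
  have hrestr : (volume : Measure ℝ).restrict ((fun t : ℝ => d + c * t) '' s)
      = ENNReal.ofReal |c| •
        Measure.map (fun t : ℝ => d + c * t) ((volume : Measure ℝ).restrict s) := by
    have h1 : (volume : Measure ℝ) = ENNReal.ofReal |c| •
        Measure.map (fun t : ℝ => d + c * t) volume := by
      rw [hmap, smul_smul, ← ENNReal.ofReal_mul (abs_nonneg _), ← abs_mul,
        mul_inv_cancel₀ hc, abs_one, ENNReal.ofReal_one, one_smul]
    calc (volume : Measure ℝ).restrict ((fun t : ℝ => d + c * t) '' s)
        = (ENNReal.ofReal |c| • Measure.map (fun t : ℝ => d + c * t) volume).restrict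
            ((fun t : ℝ => d + c * t) '' s) := by rw [← h1]
      _ = ENNReal.ofReal |c| • (Measure.map (fun t : ℝ => d + c * t) volume).restrict
            ((fun t : ℝ => d + c * t) '' s) := by rw [Measure.restrict_smul]
      _ = ENNReal.ofReal |c| • Measure.map (fun t : ℝ => d + c * t)
            ((volume : Measure ℝ).restrict
              ((fun t : ℝ => d + c * t) ⁻¹' ((fun t : ℝ => d + c * t) '' s))) := by
          rw [Measure.restrict_map hmm himg]
      _ = ENNReal.ofReal |c| • Measure.map (fun t : ℝ => d + c * t)
            ((volume : Measure ℝ).restrict s) := by rw [Set.preimage_image_eq s hinj]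
  rw [hrestr, lintegral_smul_measure, hemb.lintegral_map, smul_eq_mul]

/-- The preimage of a null set under a non-constant affine map is null. -/
theorem affine_preimage_null (c d : ℝ) (hc : c ≠ 0) {N : Set ℝ} (hN : MeasurableSet N)
    (h0 : volume N = 0) : volume ((fun t : ℝ => d + c * t) ⁻¹' N) = 0 := by
  have hmm : Measurable (fun t : ℝ => d + c * t) := (measurable_const_mul c).const_add d
  have hmap : Measure.map (fun t : ℝ => d + c * t) volume
      = ENNReal.ofReal |c⁻¹| • (volume : Measure ℝ) := by
    have h1 : (fun t : ℝ => d + c * t) = (fun x : ℝ => d + x) ∘ (fun t : ℝ => c * t) := rfl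
    rw [h1, ← Measure.map_map (measurable_const_add d) (measurable_const_mul c),
      Real.map_volume_mul_left hc, Measure.map_smul, map_add_left_eq_self]
  have h2 := Measure.map_apply hmm hN (μ := (volume : Measure ℝ)) (f := fun t : ℝ => d + c * t)
  rw [hmap] at h2
  simp only [Measure.smul_apply, smul_eq_mul, h0, mul_zero] at h2
  exact h2.symm ▸ rfl

theorem enn_sq (z : ℂ) : ((‖z‖₊ : ENNReal)) ^ (2:ℝ) = ENNReal.ofReal (‖z‖ ^ 2) := by
  rw [← ENNReal.ofReal_coe_nnreal, coe_nnnorm, ENNReal.ofReal_rpow_of_nonneg (norm_nonneg _) (by norm_num)]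
  norm_num

theorem bridge {r : ℝ → ℝ} {s : Set ℝ}
    (hr : AEMeasurable (fun x => ENNReal.ofReal |r x|) ((volume : Measure ℝ).restrict s))
    {u : ℝ → ℂ} (hu : AEStronglyMeasurable u (wM r s)) :
    ∫⁻ x, (‖u x‖₊ : ENNReal) ^ (2:ℝ) ∂(wM r s)
      = ∫⁻ x in s, ENNReal.ofReal (‖u x‖ ^ 2 * |r x|) := by
  simp_rw [enn_sq]
  rw [wM, lintegral_withDensity_eq_lintegral_mul₀' hr
    (((hu.norm.aemeasurable.pow_const 2).ennreal_ofReal))]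
  refine lintegral_congr fun x => ?_
  simp only [Pi.mul_apply]
  rw [← ENNReal.ofReal_mul (abs_nonneg _), mul_comm (|r x|)]

theorem restrict_ac {r : ℝ → ℝ} {s : Set ℝ}
    (hrm : AEMeasurable (fun x => ENNReal.ofReal |r x|) ((volume : Measure ℝ).restrict s))
    (hrne : ∀ᵐ x ∂((volume : Measure ℝ).restrict s), r x ≠ 0) :
    ((volume : Measure ℝ).restrict s) ≪ wM r s := by
  refine Measure.AbsolutelyContinuous.mk fun t htm ht0 => ?_
  rw [wM, withDensity_apply _ htm] at ht0
  have h1 : (fun x => ENNReal.ofReal |r x|) =ᵐ[((volume : Measure ℝ).restrict s).restrict t] 0 :=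
    (lintegral_eq_zero_iff' (hrm.restrict)).mp ht0
  have h2 : ∀ᵐ x ∂(((volume : Measure ℝ).restrict s).restrict t), r x ≠ 0 :=
    ae_mono Measure.restrict_le_self hrne
  have h3 : ∀ᵐ x ∂(((volume : Measure ℝ).restrict s).restrict t), False := by
    filter_upwards [h1, h2] with x hx1 hx2
    simp only [Pi.zero_apply, ENNReal.ofReal_eq_zero, abs_nonpos_iff] at hx1
    exact hx2 hx1
  have h4 : (((volume : Measure ℝ).restrict s).restrict t) univ = 0 := by
    simpa using ae_iff.mp h3
  rwa [Measure.restrict_apply_univ] at h4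

/-- **Boundedness of `S` (from the proof of Theorem 3.2).** If `R` is an upper bound of
`ρ` on `[0,ε]`, then for every `f ∈ L_{2,|r|}(ι)` one has `Sf ∈ L_{2,|r|}(ȷ)` with
`∫_ȷ |Sf|² |r| ≤ |α'| |β'| R ∫_ι |f|² |r|`; in particular `S` is bounded with norm at
most `(|α'| |β'| R)^{1/2}`. -/
theorem S_bounded (p q r : ℝ → ℝ) (hc : Coeffs p q r) (X : Setup p r)
    (R : ℝ) (hR : ∀ t ∈ Set.Icc (0 : ℝ) X.ε, X.ρ t ≤ R) :
    ∀ f : ℝ → ℂ, MemLp f 2 (wM r X.iInt) →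
      MemLp (X.Sf f) 2 (wM r X.jInt) ∧
      (∫ x in X.jInt, ‖X.Sf f x‖ ^ 2 * |r x|) ≤
        |X.α'| * |X.β'| * R * ∫ x in X.iInt, ‖f x‖ ^ 2 * |r x| ∧
      eLpNorm (X.Sf f) 2 (wM r X.jInt) ≤
        ENNReal.ofReal (Real.sqrt (|X.α'| * |X.β'| * R)) * eLpNorm f 2 (wM r X.iInt) := by
  intro f hf
  -- notation
  set w : ℝ → ENNReal := fun x => ENNReal.ofReal |r x| with hw
  set mα : ℝ → ℝ := fun t => X.a + X.α' * t with hmα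
  set mβ : ℝ → ℝ := fun t => X.b + X.β' * t with hmβ
  set θ : ℝ → ℝ := fun x => (x - X.b) / X.β' with hθ
  set F : ℝ → ℂ := fun x => if θ x ∈ Set.Icc (0:ℝ) X.ε then
      ((|X.α'| : ℝ) : ℂ) * f (mα (θ x)) * ((X.φ (θ x) : ℝ) : ℂ) else 0 with hF
  set K : Set ℝ := mβ '' (Set.Icc 0 X.ε) with hK
  set K' : Set ℝ := mα '' (Set.Icc 0 X.ε) with hK'
  have hιm : MeasurableSet X.iInt := measurableSet_Icc
  have hjm : MeasurableSet X.jInt := measurableSet_Icc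
  have h_isub : X.iInt ⊆ Set.Icc (-1:ℝ) 1 := by
    unfold Setup.iInt
    rcases X.hab with ⟨h1, h2⟩ | ⟨h1, h2⟩ | ⟨h1, h2⟩ | ⟨h1, h2⟩ <;>
      rw [h1, h2] <;> norm_num <;> intro x hx <;> exact ⟨by linarith [hx.1], by linarith [hx.2]⟩
  have h_jsub : X.jInt ⊆ Set.Icc (-1:ℝ) 1 := by
    unfold Setup.jInt
    rcases X.hbb with ⟨h1, h2⟩ | ⟨h1, h2⟩ | ⟨h1, h2⟩ | ⟨h1, h2⟩ <;>
      rw [h1, h2] <;> norm_num <;> intro x hx <;> exact ⟨by linarith [hx.1], by linarith [hx.2]⟩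
  have hK'i : K' ⊆ X.iInt := by
    rintro x ⟨t, ht, rfl⟩; exact X.mapsα t ht
  have hKj : K ⊆ X.jInt := by
    rintro x ⟨t, ht, rfl⟩; exact X.mapsβ t ht
  have hmβc : Continuous mβ := by fun_prop
  have hKmeas : MeasurableSet K := (isCompact_Icc.image hmβc).measurableSet
  have hrae : ∀ s : Set ℝ, s ⊆ Set.Icc (-1:ℝ) 1 →
      AEMeasurable w ((volume : Measure ℝ).restrict s) := by
    intro s hsub
    have h1 : AEMeasurable r ((volume : Measure ℝ).restrict s) :=
      hc.2.2.1.aemeasurable.mono_measure (Measure.restrict_mono hsub le_rfl)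
    exact (measurable_abs.comp_aemeasurable h1).ennreal_ofReal
  have hrne : ∀ s : Set ℝ, s ⊆ Set.Icc (-1:ℝ) 1 →
      ∀ᵐ x ∂((volume : Measure ℝ).restrict s), r x ≠ 0 := by
    intro s hsub
    have h' : ∀ᵐ x ∂((volume : Measure ℝ).restrict s), 0 < p x ∧ 0 < x * r x :=
      ae_mono (Measure.restrict_mono hsub le_rfl) hc.2.2.2
    filter_upwards [h'] with x hx hx0
    rw [hx0, mul_zero] at hx
    exact lt_irrefl 0 hx.2
  have acI : ((volume : Measure ℝ).restrict X.iInt) ≪ wM r X.iInt :=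
    restrict_ac (hrae _ h_isub) (hrne _ h_isub)
  have wdJ : wM r X.jInt ≪ (volume : Measure ℝ).restrict X.jInt :=
    withDensity_absolutelyContinuous _ _
  -- measurable representative of f
  have hfm : AEStronglyMeasurable f ((volume : Measure ℝ).restrict X.iInt) :=
    hf.1.mono_ac acI
  set f₀ : ℝ → ℂ := hfm.mk f with hf₀def
  have hf₀ : StronglyMeasurable f₀ := hfm.stronglyMeasurable_mk
  have hff₀ : f =ᵐ[(volume : Measure ℝ).restrict X.iInt] f₀ := hfm.ae_eq_mk
  obtain ⟨Nf, hNf1, hNf2, hNf3⟩ :=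
    exists_measurable_superset_of_null (ae_iff.mp hff₀)
  have hNf3' : volume (Nf ∩ X.iInt) = 0 := by
    rwa [Measure.restrict_apply hNf2] at hNf3
  -- bad set for the coefficient conditions
  obtain ⟨Nc, hNc1, hNc2, hNc3⟩ :=
    exists_measurable_superset_of_null (ae_iff.mp hc.2.2.2)
  have hNc3' : volume (Nc ∩ Set.Icc (-1:ℝ) 1) = 0 := by
    rwa [Measure.restrict_apply hNc2] at hNc3
  have claimA : ∀ x ∈ X.jInt, X.Sf f x = F x := by
    intro x hx
    have himg : X.β1 '' (Set.Icc 0 1) = Set.Icc (min X.b X.b1) (max X.b X.b1) :=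
      X.hβ1bij.image_eq
    have hex : ∃ t ∈ Set.Icc (0:ℝ) 1, X.β1 t = x := by
      have hx' : x ∈ X.β1 '' (Set.Icc 0 1) := by rw [himg]; exact hx
      rcases hx' with ⟨t, ht, hxt⟩
      exact ⟨t, ht, hxt⟩
    set u : ℝ := Function.invFunOn X.β1 (Set.Icc 0 1) x with hu
    have hu1 : u ∈ Set.Icc (0:ℝ) 1 := Function.invFunOn_mem hex
    have hux : X.β1 u = x := Function.invFunOn_eq hex
    by_cases hcase : θ x ∈ Set.Icc (0:ℝ) X.ε
    · have hsmem : θ x ∈ Set.Icc (0:ℝ) 1 := ⟨hcase.1, hcase.2.trans X.hε1⟩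
      have hβs : X.β1 (θ x) = x := by
        rw [X.hβ1eq _ hcase]
        simp only [hθ]
        rw [mul_comm, div_mul_cancel₀ _ X.hβ']
        ring
      have huθ : u = θ x := X.hβ1bij.injOn hu1 hsmem (by rw [hux, hβs])
      simp only [Setup.Sf, hF, if_pos hcase, ← hu, huθ]
      rw [X.hα1eq _ hcase]
    · have huε : u ∉ Set.Icc (0:ℝ) X.ε := by
        intro hmem
        apply hcase
        have hxu : x = X.b + X.β' * u := by rw [← X.hβ1eq _ hmem, hux]
        rw [hxu]
        simp only [hθ]
        rw [add_sub_cancel_left, mul_div_cancel_left₀ u X.hβ']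
        exact hmem
      have hu2 : u ∈ Set.Icc X.ε 1 :=
        ⟨le_of_not_gt fun hlt => huε ⟨hu1.1, hlt.le⟩, hu1.2⟩
      have hφu : X.φ u = 0 := X.hφ0 u hu2
      simp only [Setup.Sf, hF, if_neg hcase, ← hu, hφu]
      simp
  -- F vanishes off K
  have hKθ : K = θ ⁻¹' (Set.Icc 0 X.ε) := by
    ext x
    constructor
    · rintro ⟨t, ht, rfl⟩
      have : θ (mβ t) = t := by
        simp only [hθ, hmβ]
        rw [add_sub_cancel_left, mul_div_cancel_left₀ t X.hβ']
      simpa [this] using ht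
    · intro hx
      refine ⟨θ x, hx, ?_⟩
      simp only [hθ, hmβ]
      rw [mul_comm, div_mul_cancel₀ _ X.hβ']
      ring
  have hF0K : ∀ x, x ∉ K → F x = 0 := by
    intro x hx
    rw [hKθ] at hx
    simp only [hF, Set.mem_preimage] at hx ⊢
    rw [if_neg hx]
  -- a.e. equality with a measurable function
  set ψ : ℝ → ℝ := (Set.Icc (0:ℝ) X.ε).indicator X.φ with hψ
  set F₀ : ℝ → ℂ := fun x =>
      ((|X.α'| : ℝ) : ℂ) * f₀ (mα (θ x)) * ((ψ (θ x) : ℝ) : ℂ) with hF₀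
  set μm : ℝ → ℝ := fun x => (X.a - X.α' * X.b / X.β') + (X.α' / X.β') * x with hμm
  have hμm_eq : ∀ x, mα (θ x) = μm x := by
    intro x; simp only [hmα, hθ, hμm]; field_simp; ring
  have hB0 : volume (μm ⁻¹' (Nf ∩ X.iInt)) = 0 :=
    affine_preimage_null _ _ (div_ne_zero X.hα' X.hβ') (hNf2.inter hιm) hNf3'
  have hFF₀ : F =ᵐ[(volume : Measure ℝ)] F₀ := by
    have hBc : ∀ᵐ x ∂(volume : Measure ℝ), x ∉ μm ⁻¹' (Nf ∩ X.iInt) := by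
      refine (ae_iff).mpr ?_
      simpa only [not_not, Set.setOf_mem_eq] using hB0
    filter_upwards [hBc] with x hxB
    simp only [hF, hF₀, hψ]
    by_cases hcase : θ x ∈ Set.Icc (0:ℝ) X.ε
    · rw [if_pos hcase, Set.indicator_of_mem hcase]
      have hmem : mα (θ x) ∈ X.iInt := X.mapsα _ hcase
      have hne : mα (θ x) ∉ Nf := by
        intro hN
        apply hxB
        rw [Set.mem_preimage, ← hμm_eq]
        exact ⟨hN, hmem⟩
      have hfe : f (mα (θ x)) = f₀ (mα (θ x)) := by
        by_contra h
        exact hne (hNf1 h)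
      rw [hfe]
    · rw [if_neg hcase, Set.indicator_of_notMem hcase]
      simp
  have hθc : Continuous θ := by
    simp only [hθ]
    fun_prop
  have asmF₀ : AEStronglyMeasurable F₀ ((volume : Measure ℝ).restrict X.jInt) := by
    have hind : F₀ = K.indicator F₀ := by
      funext x
      by_cases hx : x ∈ K
      · rw [Set.indicator_of_mem hx]
      · rw [Set.indicator_of_notMem hx]
        have hxθ : θ x ∉ Set.Icc (0:ℝ) X.ε := by rw [hKθ] at hx; exact hx
        simp only [hF₀, hψ, Set.indicator_of_notMem hxθ]
        simp
    rw [hind, aestronglyMeasurable_indicator_iff hKmeas,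
      Measure.restrict_restrict hKmeas, Set.inter_eq_self_of_subset_left hKj]
    have hμmm : Measurable μm := by
      simp only [hμm]
      fun_prop
    have part1 : AEStronglyMeasurable (fun x => f₀ (mα (θ x)))
        ((volume : Measure ℝ).restrict K) := by
      have hcomp : (fun x => f₀ (mα (θ x))) = f₀ ∘ μm := by
        funext x
        simp [Function.comp, hμm_eq x]
      rw [hcomp]
      exact (hf₀.comp_measurable hμmm).aestronglyMeasurable
    have part2 : AEStronglyMeasurable (fun x => ((ψ (θ x) : ℝ) : ℂ))
        ((volume : Measure ℝ).restrict K) := by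
      have hcont : ContinuousOn (fun x => X.φ (θ x)) K := by
        refine ContinuousOn.comp (X.hφC.continuousOn) hθc.continuousOn ?_
        intro x hx
        rw [hKθ] at hx
        exact ⟨hx.1, hx.2.trans X.hε1⟩
      have h1 : AEStronglyMeasurable (fun x => X.φ (θ x))
          ((volume : Measure ℝ).restrict K) := hcont.aestronglyMeasurable hKmeas
      have h2 : (fun x => ((X.φ (θ x) : ℝ) : ℂ)) =ᵐ[(volume : Measure ℝ).restrict K]
          (fun x => ((ψ (θ x) : ℝ) : ℂ)) := by
        filter_upwards [ae_restrict_mem hKmeas] with x hx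
        rw [hKθ] at hx
        simp [hψ, Set.indicator_of_mem (Set.mem_preimage.mp hx)]
      exact (Complex.continuous_ofReal.comp_aestronglyMeasurable h1).congr h2
    exact (aestronglyMeasurable_const.mul part1).mul part2
  have hSfF₀ : X.Sf f =ᵐ[(volume : Measure ℝ).restrict X.jInt] F₀ := by
    have h1 : X.Sf f =ᵐ[(volume : Measure ℝ).restrict X.jInt] F := by
      filter_upwards [ae_restrict_mem hjm] with x hx
      exact claimA x hx
    exact h1.trans (ae_mono Measure.restrict_le_self hFF₀)
  have asmSf : AEStronglyMeasurable (X.Sf f) ((volume : Measure ℝ).restrict X.jInt) :=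
    asmF₀.congr hSfF₀.symm
  have asmSfwM : AEStronglyMeasurable (X.Sf f) (wM r X.jInt) := asmSf.mono_ac wdJ
  -- the main lintegral estimate
  set Li : ENNReal := ∫⁻ x in X.iInt, ENNReal.ofReal (‖f x‖ ^ 2 * |r x|) with hLi
  set Lj : ENNReal := ∫⁻ x in X.jInt, ENNReal.ofReal (‖X.Sf f x‖ ^ 2 * |r x|) with hLj
  have hR0 : 0 ≤ R := le_trans (X.ρnn 0 ⟨le_refl _, X.hε.le⟩) (hR 0 ⟨le_refl _, X.hε.le⟩)
  have cnonneg : 0 ≤ |X.α'| * |X.β'| * R := by positivity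
  have Ibound : Lj ≤ ENNReal.ofReal (|X.α'| * |X.β'| * R) * Li := by
    have e1 : Lj = ∫⁻ x in X.jInt, ENNReal.ofReal (‖F x‖ ^ 2 * |r x|) := by
      rw [hLj]
      refine setLIntegral_congr_fun hjm (fun x hx => ?_)
      rw [claimA x hx]
    have e2 : ∫⁻ x in X.jInt, ENNReal.ofReal (‖F x‖ ^ 2 * |r x|)
        = ∫⁻ x in K, ENNReal.ofReal (‖F x‖ ^ 2 * |r x|) := by
      have h1 : ∀ᵐ x ∂(volume : Measure ℝ), x ∈ X.jInt →
          ENNReal.ofReal (‖F x‖ ^ 2 * |r x|)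
            = K.indicator (fun x => ENNReal.ofReal (‖F x‖ ^ 2 * |r x|)) x := by
        refine Filter.Eventually.of_forall fun x hx => ?_
        by_cases hxK : x ∈ K
        · rw [Set.indicator_of_mem hxK]
        · rw [Set.indicator_of_notMem hxK, hF0K x hxK]
          simp
      rw [setLIntegral_congr_fun_ae hjm h1, lintegral_indicator hKmeas,
        Measure.restrict_restrict hKmeas, Set.inter_eq_self_of_subset_left hKj]
    have e3 : ∫⁻ x in K, ENNReal.ofReal (‖F x‖ ^ 2 * |r x|)
        = ENNReal.ofReal |X.β'| *
            ∫⁻ t in Set.Icc 0 X.ε, ENNReal.ofReal (‖F (mβ t)‖ ^ 2 * |r (mβ t)|) := by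
      rw [hK]
      simp only [hmβ]
      exact setLIntegral_affine_image X.β' X.b X.hβ' measurableSet_Icc _
    have haet : ∀ᵐ t ∂((volume : Measure ℝ).restrict (Set.Icc 0 X.ε)),
        ENNReal.ofReal (‖F (mβ t)‖ ^ 2 * |r (mβ t)|)
          ≤ ENNReal.ofReal (|X.α'| ^ 2 * R) *
              ENNReal.ofReal (‖f (mα t)‖ ^ 2 * |r (mα t)|) := by
      have hmem : ∀ᵐ t ∂((volume : Measure ℝ).restrict (Set.Icc 0 X.ε)), t ∈ Set.Icc (0:ℝ) X.ε :=
        ae_restrict_mem measurableSet_Icc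
      have hne0 : ∀ᵐ t ∂((volume : Measure ℝ).restrict (Set.Icc 0 X.ε)), t ≠ 0 := by
        refine (ae_iff).mpr ?_
        have hset : {t : ℝ | ¬ t ≠ 0} = {0} := by ext t; simp
        rw [hset, Measure.restrict_apply (measurableSet_singleton 0)]
        exact measure_mono_null Set.inter_subset_left Real.volume_singleton
      have hBα : ∀ᵐ t ∂((volume : Measure ℝ).restrict (Set.Icc 0 X.ε)),
          t ∉ mα ⁻¹' (Nc ∩ Set.Icc (-1:ℝ) 1) := by
        have h0 : volume (mα ⁻¹' (Nc ∩ Set.Icc (-1:ℝ) 1)) = 0 := by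
          simp only [hmα]
          exact affine_preimage_null _ _ X.hα' (hNc2.inter measurableSet_Icc) hNc3'
        exact ae_mono Measure.restrict_le_self ((ae_iff).mpr (by simpa only [not_not, Set.setOf_mem_eq] using h0))
      filter_upwards [hmem, hne0, hBα] with t ht htne htB
      have htIoc : t ∈ Set.Ioc 0 X.ε := ⟨lt_of_le_of_ne ht.1 (Ne.symm htne), ht.2⟩
      have hθt : θ (mβ t) = t := by
        simp only [hθ, hmβ]
        rw [add_sub_cancel_left, mul_div_cancel_left₀ t X.hβ']
      have hFm : F (mβ t) = ((|X.α'| : ℝ) : ℂ) * f (mα t) * ((X.φ t : ℝ) : ℂ) := by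
        simp only [hF, hθt, if_pos ht]
      have hmαmem : mα t ∈ Set.Icc (-1:ℝ) 1 := h_isub (X.mapsα t ht)
      have hrα : r (mα t) ≠ 0 := by
        intro h0
        have hnotin : mα t ∉ Nc := fun hin => htB (Set.mem_preimage.mpr ⟨hin, hmαmem⟩)
        have h5 : ¬ ¬ (0 < p (mα t) ∧ 0 < (mα t) * r (mα t)) :=
          fun hneg => hnotin (hNc1 hneg)
        push_neg at h5
        rw [h0, mul_zero] at h5
        exact lt_irrefl 0 h5.2
      have hrβ : |r (mβ t)| = X.ρ t * |r (mα t)| := by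
        have h3 : X.ρ t = |r (mβ t)| / |r (mα t)| := X.ρeq t htIoc
        rw [h3, div_mul_cancel₀ _ (abs_ne_zero.mpr hrα)]
      rw [hFm, ← ENNReal.ofReal_mul (by positivity)]
      apply ENNReal.ofReal_le_ofReal
      have hnorm : ‖((|X.α'| : ℝ) : ℂ) * f (mα t) * ((X.φ t : ℝ) : ℂ)‖
          = |X.α'| * ‖f (mα t)‖ * |X.φ t| := by
        rw [norm_mul, norm_mul, Complex.norm_real, Complex.norm_real, Real.norm_eq_abs,
          Real.norm_eq_abs, abs_abs]
      rw [hnorm, hrβ]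
      have hφmem := X.hφmaps t ⟨ht.1, ht.2.trans X.hε1⟩
      have hφ1 : |X.φ t| ≤ 1 := abs_le.mpr ⟨by linarith [hφmem.1], hφmem.2⟩
      have hρt := X.ρnn t ht
      have hRt := hR t ht
      have hφsq : |X.φ t| ^ 2 ≤ 1 := by nlinarith [abs_nonneg (X.φ t)]
      have h1 : X.ρ t * |X.φ t| ^ 2 ≤ R :=
        le_trans (mul_le_of_le_one_right hρt hφsq) hRt
      calc (|X.α'| * ‖f (mα t)‖ * |X.φ t|) ^ 2 * (X.ρ t * |r (mα t)|)
          = (X.ρ t * |X.φ t| ^ 2) * (|X.α'| ^ 2 * (‖f (mα t)‖ ^ 2 * |r (mα t)|)) := by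
            ring
        _ ≤ R * (|X.α'| ^ 2 * (‖f (mα t)‖ ^ 2 * |r (mα t)|)) :=
            mul_le_mul_of_nonneg_right h1 (by positivity)
        _ = |X.α'| ^ 2 * R * (‖f (mα t)‖ ^ 2 * |r (mα t)|) := by ring
    have e4 : ∫⁻ t in Set.Icc 0 X.ε, ENNReal.ofReal (‖F (mβ t)‖ ^ 2 * |r (mβ t)|)
        ≤ ENNReal.ofReal (|X.α'| ^ 2 * R) *
            ∫⁻ t in Set.Icc 0 X.ε, ENNReal.ofReal (‖f (mα t)‖ ^ 2 * |r (mα t)|) := by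
      rw [← lintegral_const_mul' _ _ ENNReal.ofReal_ne_top]
      exact lintegral_mono_ae haet
    have e5 : ENNReal.ofReal |X.α'| *
        ∫⁻ t in Set.Icc 0 X.ε, ENNReal.ofReal (‖f (mα t)‖ ^ 2 * |r (mα t)|)
        = ∫⁻ x in K', ENNReal.ofReal (‖f x‖ ^ 2 * |r x|) := by
      rw [hK']
      simp only [hmα]
      exact (setLIntegral_affine_image X.α' X.a X.hα' measurableSet_Icc
        (fun x => ENNReal.ofReal (‖f x‖ ^ 2 * |r x|))).symm
    have e6 : ∫⁻ x in K', ENNReal.ofReal (‖f x‖ ^ 2 * |r x|) ≤ Li := by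
      rw [hLi]
      exact lintegral_mono' (Measure.restrict_mono hK'i le_rfl) le_rfl
    calc Lj = ENNReal.ofReal |X.β'| * ∫⁻ t in Set.Icc 0 X.ε,
            ENNReal.ofReal (‖F (mβ t)‖ ^ 2 * |r (mβ t)|) := by rw [e1, e2, e3]
      _ ≤ ENNReal.ofReal |X.β'| * (ENNReal.ofReal (|X.α'| ^ 2 * R) *
            ∫⁻ t in Set.Icc 0 X.ε, ENNReal.ofReal (‖f (mα t)‖ ^ 2 * |r (mα t)|)) :=
          mul_le_mul_right e4 _
      _ = ENNReal.ofReal (|X.α'| * |X.β'| * R) * (ENNReal.ofReal |X.α'| *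
            ∫⁻ t in Set.Icc 0 X.ε, ENNReal.ofReal (‖f (mα t)‖ ^ 2 * |r (mα t)|)) := by
          rw [← mul_assoc, ← mul_assoc, ← ENNReal.ofReal_mul (abs_nonneg _),
            ← ENNReal.ofReal_mul cnonneg,
            show |X.β'| * (|X.α'| ^ 2 * R) = |X.α'| * |X.β'| * R * |X.α'| from by ring]
      _ = ENNReal.ofReal (|X.α'| * |X.β'| * R) *
            ∫⁻ x in K', ENNReal.ofReal (‖f x‖ ^ 2 * |r x|) := by rw [e5]
      _ ≤ ENNReal.ofReal (|X.α'| * |X.β'| * R) * Li := mul_le_mul_right e6 _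
  have bridgeI : ∫⁻ x, (‖f x‖₊ : ENNReal) ^ (2:ℝ) ∂(wM r X.iInt) = Li :=
    bridge (hrae _ h_isub) hf.1
  have bridgeJ : ∫⁻ x, (‖X.Sf f x‖₊ : ENNReal) ^ (2:ℝ) ∂(wM r X.jInt) = Lj :=
    bridge (hrae _ h_jsub) asmSfwM
  have heLpf : eLpNorm f 2 (wM r X.iInt) = Li ^ (1/2 : ℝ) := by
    rw [eLpNorm_eq_lintegral_rpow_enorm_toReal (by norm_num) (by norm_num)]
    simp only [ENNReal.toReal_ofNat, enorm_eq_nnnorm, bridgeI]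
  have heLpS : eLpNorm (X.Sf f) 2 (wM r X.jInt) = Lj ^ (1/2 : ℝ) := by
    rw [eLpNorm_eq_lintegral_rpow_enorm_toReal (by norm_num) (by norm_num)]
    simp only [ENNReal.toReal_ofNat, enorm_eq_nnnorm, bridgeJ]
  have LiTop : Li ≠ ⊤ := by
    have h1 := hf.2
    rw [heLpf] at h1
    intro hcon
    rw [hcon] at h1
    simp [ENNReal.top_rpow_of_pos (by norm_num : (0:ℝ) < 1/2)] at h1
  have LjTop : Lj ≠ ⊤ :=
    ne_top_of_le_ne_top (ENNReal.mul_ne_top ENNReal.ofReal_ne_top LiTop) Ibound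
  refine ⟨⟨asmSfwM, ?_⟩, ?_, ?_⟩
  · rw [heLpS]
    exact ENNReal.rpow_lt_top_of_nonneg (by norm_num) LjTop
  · -- the real integral inequality
    have hrabs_j : AEStronglyMeasurable (fun x => |r x|)
        ((volume : Measure ℝ).restrict X.jInt) := by
      have h1 := hc.2.2.1.aestronglyMeasurable.mono_measure
        (Measure.restrict_mono h_jsub le_rfl)
      exact h1.norm.congr (Filter.Eventually.of_forall fun x => Real.norm_eq_abs (r x))
    have hrabs_i : AEStronglyMeasurable (fun x => |r x|)
        ((volume : Measure ℝ).restrict X.iInt) := by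
      have h1 := hc.2.2.1.aestronglyMeasurable.mono_measure
        (Measure.restrict_mono h_isub le_rfl)
      exact h1.norm.congr (Filter.Eventually.of_forall fun x => Real.norm_eq_abs (r x))
    have hLv : (∫ x in X.jInt, ‖X.Sf f x‖ ^ 2 * |r x|) = Lj.toReal := by
      rw [hLj, integral_eq_lintegral_of_nonneg_ae
        (Filter.Eventually.of_forall fun x => mul_nonneg (sq_nonneg _) (abs_nonneg _))
        (((asmSf.norm.mul asmSf.norm).congr (Filter.Eventually.of_forall fun x => by simp [pow_two])).mul
          hrabs_j)]
    have hRv : (∫ x in X.iInt, ‖f x‖ ^ 2 * |r x|) = Li.toReal := by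
      rw [hLi, integral_eq_lintegral_of_nonneg_ae
        (Filter.Eventually.of_forall fun x => mul_nonneg (sq_nonneg _) (abs_nonneg _))
        (((hfm.norm.mul hfm.norm).congr (Filter.Eventually.of_forall fun x => by simp [pow_two])).mul
          hrabs_i)]
    rw [hLv, hRv]
    have h2 := ENNReal.toReal_mono (ENNReal.mul_ne_top ENNReal.ofReal_ne_top LiTop) Ibound
    rwa [ENNReal.toReal_mul, ENNReal.toReal_ofReal cnonneg] at h2
  · rw [heLpS, heLpf]
    calc Lj ^ (1/2 : ℝ) ≤ (ENNReal.ofReal (|X.α'| * |X.β'| * R) * Li) ^ (1/2 : ℝ) :=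
          ENNReal.rpow_le_rpow Ibound (by norm_num)
      _ = (ENNReal.ofReal (|X.α'| * |X.β'| * R)) ^ (1/2 : ℝ) * Li ^ (1/2 : ℝ) :=
          ENNReal.mul_rpow_of_nonneg _ _ (by norm_num)
      _ = ENNReal.ofReal (Real.sqrt (|X.α'| * |X.β'| * R)) * Li ^ (1/2 : ℝ) := by
          rw [ENNReal.ofReal_rpow_of_nonneg cnonneg (by norm_num), Real.sqrt_eq_rpow]


end SL
end
end

section
/- Let X₀ be a bounded linear operator on L_{2,|r|}(-1,1) with Hilbert-space adjoint X₀*, satisfying: (i) for every f ∈ L_{2,|r|}(-1,1), (X₀*f)(x) = 0 for almost every x with 1/2 ≤ |x| ≤ 1; (ii) X₀ maps F_max into F_max; (iii) (X₀f)(0) = f(0) for all f ∈ F_max; (iv) for every f ∈ F_max, the restrictions of X₀*f to [-1,0] and [0,1] lie in F_max([-1,0]) and F_max([0,1]) respectively; (v) (X₀*f)(0+) + (X₀*f)(0-) = -2·f(0) for all f ∈ F_max. Then the operator W₀ := J₀(X₀*X₀ + I) satisfies: W₀ is bounded; J₀W₀ - I = X₀*X₀ is nonnegative on the Hilbert space L_{2,|r|}(-1,1);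 W₀ is boundedly invertible and positive in the Krein space ([W₀f, f] > 0 for all f ≠ 0); (W₀f)(x) = (J₀f)(x) for almost every x with 1/2 ≤ |x| ≤ 1, for all f; and W₀ maps F_max into F_max. -/
open MeasureTheory Set Filter

noncomputable section

namespace SL

/-- The Hilbert space `L_{2,|r|}(-1,1)`. -/
abbrev Pa (r : ℝ → ℝ) := Lp ℂ 2 (wM r (Set.Icc (-1 : ℝ) 1))

end SL
namespace SL


section Aux

lemma ae_wM_iff {r : ℝ → ℝ} {I : Set ℝ} (hr : AEMeasurable r (volume.restrict I)) {P : ℝ → Prop} :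
    (∀ᵐ x ∂wM r I, P x) ↔ ∀ᵐ x ∂(volume.restrict I), r x ≠ 0 → P x := by
  have hd : AEMeasurable (fun x => ENNReal.ofReal |r x|) (volume.restrict I) :=
    ENNReal.measurable_ofReal.comp_aemeasurable
      (continuous_abs.measurable.comp_aemeasurable hr)
  rw [wM, ae_withDensity_iff' hd]
  refine eventually_congr (Eventually.of_forall fun x => ?_)
  have h : ENNReal.ofReal |r x| ≠ 0 ↔ r x ≠ 0 := by
    simp [ENNReal.ofReal_eq_zero, not_le, abs_pos]
  rw [h]

lemma ae_wM_of_ae {r : ℝ → ℝ} {I : Set ℝ} {P : ℝ → Prop}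
    (h : ∀ᵐ x ∂(volume.restrict I), P x) : ∀ᵐ x ∂wM r I, P x :=
  Measure.AbsolutelyContinuous.ae_le (withDensity_absolutelyContinuous _ _) h

lemma wM_mono {r : ℝ → ℝ} {I J : Set ℝ} (h : I ⊆ J) : wM r I ≤ wM r J := by
  refine Measure.le_intro fun s hs _ => ?_
  rw [wM, wM, withDensity_apply _ hs, withDensity_apply _ hs]
  exact lintegral_mono' (Measure.restrict_mono (subset_refl s)
    (Measure.restrict_mono h le_rfl)) le_rfl

lemma wM_union_le {r : ℝ → ℝ} :
    wM r (Set.Icc (-1:ℝ) 1) ≤ wM r (Set.Icc (-1:ℝ) 0) + wM r (Set.Icc (0:ℝ) 1) := by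
  have hvol : volume.restrict (Set.Icc (-1:ℝ) 1)
      ≤ volume.restrict (Set.Icc (-1:ℝ) 0) + volume.restrict (Set.Icc (0:ℝ) 1) := by
    rw [show Set.Icc (-1:ℝ) 1 = Set.Icc (-1:ℝ) 0 ∪ Set.Icc 0 1 from
      (Set.Icc_union_Icc_eq_Icc (by norm_num) (by norm_num)).symm]
    exact Measure.restrict_union_le _ _
  refine Measure.le_intro fun s hs _ => ?_
  simp only [wM, Measure.add_apply, withDensity_apply _ hs]
  calc ∫⁻ x in s, ENNReal.ofReal |r x| ∂(volume.restrict (Set.Icc (-1:ℝ) 1))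
      ≤ ∫⁻ x in s, ENNReal.ofReal |r x|
          ∂(volume.restrict (Set.Icc (-1:ℝ) 0) + volume.restrict (Set.Icc (0:ℝ) 1)) :=
        lintegral_mono' (Measure.restrict_mono (subset_refl s) hvol) le_rfl
    _ = _ := by rw [Measure.restrict_add, lintegral_add_measure]

lemma ae_glue {r : ℝ → ℝ} {P : ℝ → Prop}
    (h1 : ∀ᵐ x ∂wM r (Set.Icc (-1:ℝ) 0), P x)
    (h2 : ∀ᵐ x ∂wM r (Set.Icc (0:ℝ) 1), P x) :
    ∀ᵐ x ∂wM r (Set.Icc (-1:ℝ) 1), P x :=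
  Eventually.filter_mono (ae_mono wM_union_le) (ae_add_measure_iff.mpr ⟨h1, h2⟩)

lemma ae_ne_zero {s : Set ℝ} : ∀ᵐ x ∂(volume.restrict s), x ≠ (0:ℝ) := by
  refine ae_iff.mpr ?_
  simp only [ne_eq, not_not, Set.setOf_eq_eq_singleton]
  rw [Measure.restrict_apply (measurableSet_singleton 0)]
  exact measure_mono_null Set.inter_subset_left Real.volume_singleton

lemma ae_ne_zero' : ∀ᵐ x ∂(volume : Measure ℝ), x ≠ (0:ℝ) := by
  refine ae_iff.mpr ?_
  simp only [ne_eq, not_not, Set.setOf_eq_eq_singleton]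
  exact Real.volume_singleton

lemma II_sub {g' : ℝ → ℂ} {a b c d : ℝ} (h : IntervalIntegrable g' volume a b)
    (hab : a ≤ b) (hc : c ∈ Set.Icc a b) (hd : d ∈ Set.Icc a b) :
    IntervalIntegrable g' volume c d :=
  h.mono_set (by rw [Set.uIcc_of_le hab]; exact Set.uIcc_subset_Icc hc hd)

end Aux

set_option maxHeartbeats 1000000 in
/-- **Construction of `W₀` from `X₀` (from the proof of Theorem 4.2).** If `X₀` is a
bounded operator on `L_{2,|r|}(-1,1)` whose adjoint vanishes a.e. on `1/2 ≤ |x| ≤ 1`,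
which maps `F_max` into `F_max` with `(X₀f)(0) = f(0)`, and whose adjoint maps `F_max`
into `F_max[-1,0] ⊕ F_max[0,1]` with `(X₀*f)(0+) + (X₀*f)(0-) = -2 f(0)`, then
`W₀ = J₀(X₀*X₀ + I)` is bounded, `J₀W₀ - I = X₀*X₀ ≥ 0`, `W₀` is boundedly invertible
and positive in the Krein space, `W₀f = J₀f` a.e. on `1/2 ≤ |x| ≤ 1`, and
`W₀ F_max ⊆ F_max`. -/
theorem W0_of_X0 (p q r : ℝ → ℝ) (hc : Coeffs p q r)
    (X J0 : Pa r →L[ℂ] Pa r)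
    (hJ0 : ∀ f : Pa r, (J0 f : ℝ → ℂ) =ᵐ[wM r (Set.Icc (-1 : ℝ) 1)]
      fun x => ((Real.sign (r x) : ℝ) : ℂ) * (f : ℝ → ℂ) x)
    -- (i)
    (hi : ∀ f : Pa r, ∀ᵐ x ∂(wM r (Set.Icc (-1 : ℝ) 1)),
      1 / 2 ≤ |x| → ((ContinuousLinearMap.adjoint X) f : ℝ → ℂ) x = 0)
    -- (ii)
    (hii : ∀ f : Pa r, InFmax p r (-1) 1 ⇑f → InFmax p r (-1) 1 ⇑(X f))
    -- (iii)
    (hiii : ∀ (f : Pa r) (g g' : ℝ → ℂ), (⇑f =ᵐ[wM r (Set.Icc (-1 : ℝ) 1)] g) →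
      ACOn g g' (-1) 1 →
      IntegrableOn (fun x => p x * ‖g' x‖ ^ 2) (Set.Icc (-1 : ℝ) 1) →
      ∀ G G' : ℝ → ℂ, (⇑(X f) =ᵐ[wM r (Set.Icc (-1 : ℝ) 1)] G) →
        ACOn G G' (-1) 1 → G 0 = g 0)
    -- (iv)
    (hiv : ∀ f : Pa r, InFmax p r (-1) 1 ⇑f →
      InFmax p r (-1) 0 ⇑((ContinuousLinearMap.adjoint X) f) ∧
      InFmax p r 0 1 ⇑((ContinuousLinearMap.adjoint X) f))
    -- (v)
    (hv : ∀ (f : Pa r) (g g' : ℝ → ℂ), (⇑f =ᵐ[wM r (Set.Icc (-1 : ℝ) 1)] g) →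
      ACOn g g' (-1) 1 →
      IntegrableOn (fun x => p x * ‖g' x‖ ^ 2) (Set.Icc (-1 : ℝ) 1) →
      ∀ Gm Gm' Gp Gp' : ℝ → ℂ,
        (⇑((ContinuousLinearMap.adjoint X) f) =ᵐ[wM r (Set.Icc (-1 : ℝ) 0)] Gm) →
        ACOn Gm Gm' (-1) 0 →
        (⇑((ContinuousLinearMap.adjoint X) f) =ᵐ[wM r (Set.Icc (0 : ℝ) 1)] Gp) →
        ACOn Gp Gp' 0 1 →
        Gp 0 + Gm 0 = -2 * g 0)
    (W0 : Pa r →L[ℂ] Pa r)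
    (hW0 : W0 = J0.comp ((ContinuousLinearMap.adjoint X).comp X +
      ContinuousLinearMap.id ℂ (Pa r))) :
    -- `J₀W₀ - I = X₀*X₀`
    (J0.comp W0 = (ContinuousLinearMap.adjoint X).comp X +
      ContinuousLinearMap.id ℂ (Pa r)) ∧
    -- `X₀*X₀` is nonnegative on the Hilbert space
    (∀ f : Pa r,
      0 ≤ (inner ℂ ((((ContinuousLinearMap.adjoint X).comp X) f)) f : ℂ).re ∧
      (inner ℂ ((((ContinuousLinearMap.adjoint X).comp X) f)) f : ℂ).im = 0) ∧
    -- `W₀` is boundedly invertible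
    (∃ V : Pa r →L[ℂ] Pa r, W0.comp V = ContinuousLinearMap.id ℂ (Pa r) ∧
      V.comp W0 = ContinuousLinearMap.id ℂ (Pa r)) ∧
    -- and positive in the Krein space
    (∀ f : Pa r, f ≠ 0 →
      0 < (krein0 r ⇑(W0 f) ⇑f).re ∧ (krein0 r ⇑(W0 f) ⇑f).im = 0) ∧
    -- `W₀ f = J₀ f` a.e. on `1/2 ≤ |x| ≤ 1`
    (∀ f : Pa r, ∀ᵐ x ∂(wM r (Set.Icc (-1 : ℝ) 1)),
      1 / 2 ≤ |x| → (W0 f : ℝ → ℂ) x = ((Real.sign (r x) : ℝ) : ℂ) * (f : ℝ → ℂ) x) ∧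
    -- `W₀ F_max ⊆ F_max`
    (∀ f : Pa r, InFmax p r (-1) 1 ⇑f → InFmax p r (-1) 1 ⇑(W0 f)) := by
  classical
  set T : Pa r →L[ℂ] Pa r := (ContinuousLinearMap.adjoint X).comp X
      + ContinuousLinearMap.id ℂ (Pa r) with hT
  have hrae : AEMeasurable r (volume.restrict (Set.Icc (-1:ℝ) 1)) :=
    hc.2.2.1.aestronglyMeasurable.aemeasurable
  have hrne : ∀ᵐ x ∂wM r (Set.Icc (-1:ℝ) 1), r x ≠ 0 :=
    (ae_wM_iff hrae).mpr (Eventually.of_forall fun x h => h)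
  -- `J₀² = 1`
  have hJ0J0 : J0.comp J0 = ContinuousLinearMap.id ℂ (Pa r) := by
    ext f
    simp only [ContinuousLinearMap.comp_apply, ContinuousLinearMap.id_apply]
    filter_upwards [hJ0 (J0 f), hJ0 f, hrne] with x h2 h1 hx
    rw [h2, h1]
    rcases hx.lt_or_gt with h | h
    · rw [Real.sign_of_neg h]; push_cast; ring
    · rw [Real.sign_of_pos h]; push_cast; ring
  have hJ0J0' : ∀ g : Pa r, J0 (J0 g) = g := fun g => by
    simpa using ContinuousLinearMap.ext_iff.mp hJ0J0 g
  -- `⟪Tf, f⟫ = ‖Xf‖² + ‖f‖²`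
  have hTapp : ∀ f : Pa r, T f = (ContinuousLinearMap.adjoint X) (X f) + f := fun f => rfl
  have hTinner : ∀ f : Pa r, (inner ℂ (T f) f : ℂ) = ((‖X f‖^2 + ‖f‖^2 : ℝ) : ℂ) := by
    intro f
    rw [hTapp f, inner_add_left, ContinuousLinearMap.adjoint_inner_left,
      inner_self_eq_norm_sq_to_K, inner_self_eq_norm_sq_to_K]
    norm_cast
  -- `T` is boundedly invertible
  have hlow : ∀ f : Pa r, ‖f‖ ≤ ‖T f‖ := by
    intro f
    by_cases hf : f = 0
    · simp [hf]
    have h1 : ‖f‖^2 ≤ ‖(inner ℂ (T f) f : ℂ)‖ := by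
      rw [hTinner f, Complex.norm_real, Real.norm_eq_abs, abs_of_nonneg (by positivity)]
      nlinarith [sq_nonneg ‖X f‖]
    have h2 : ‖(inner ℂ (T f) f : ℂ)‖ ≤ ‖T f‖ * ‖f‖ := norm_inner_le_norm _ _
    have hfpos : 0 < ‖f‖ := norm_pos_iff.mpr hf
    nlinarith [h1.trans h2]
  have hanti : AntilipschitzWith 1 T :=
    T.antilipschitz_of_bound fun x => by simpa using hlow x
  have hTinj : LinearMap.ker (T : Pa r →ₗ[ℂ] Pa r) = ⊥ := LinearMap.ker_eq_bot.mpr hanti.injective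
  have hclosed : IsClosed ((LinearMap.range (T : Pa r →ₗ[ℂ] Pa r) : Submodule ℂ (Pa r)) : Set (Pa r)) := by
    rw [LinearMap.coe_range]
    exact hanti.isClosed_range T.uniformContinuous
  have hTsurj : LinearMap.range (T : Pa r →ₗ[ℂ] Pa r) = ⊤ := by
    haveI : CompleteSpace (LinearMap.range (T : Pa r →ₗ[ℂ] Pa r) : Submodule ℂ (Pa r)) :=
      hclosed.completeSpace_coe
    rw [← Submodule.orthogonal_eq_bot_iff]
    refine (Submodule.eq_bot_iff _).mpr fun y hy => ?_
    have hy' : (inner ℂ (T y) y : ℂ) = 0 :=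
      (Submodule.mem_orthogonal _ y).mp hy (T y) (LinearMap.mem_range_self _ y)
    have h3 : (‖X y‖^2 + ‖y‖^2 : ℝ) = 0 := by
      have h2 : ((‖X y‖^2 + ‖y‖^2 : ℝ) : ℂ) = 0 := by rw [← hTinner y]; exact hy'
      exact_mod_cast h2
    have h4 : ‖y‖ = 0 := by nlinarith [sq_nonneg ‖X y‖, sq_nonneg ‖y‖, norm_nonneg y]
    exact norm_eq_zero.mp h4
  set e := ContinuousLinearEquiv.ofBijective T hTinj hTsurj with he
  have hVT : ∀ x, (e.symm : Pa r →L[ℂ] Pa r) (T x) = x := fun x =>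
    ContinuousLinearEquiv.ofBijective_symm_apply_apply T hTinj hTsurj x
  have hTV : ∀ x, T ((e.symm : Pa r →L[ℂ] Pa r) x) = x := fun x =>
    ContinuousLinearEquiv.ofBijective_apply_symm_apply T hTinj hTsurj x
  -- `W₀ f` pointwise a.e.
  have hW0T : ∀ f : Pa r, W0 f = J0 (T f) := fun f => by rw [hW0]; rfl
  have hW0ae : ∀ f : Pa r, ⇑(W0 f) =ᵐ[wM r (Set.Icc (-1:ℝ) 1)]
      fun x => ((Real.sign (r x) : ℝ) : ℂ)
        * (⇑((ContinuousLinearMap.adjoint X) (X f)) x + ⇑f x) := by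
    intro f
    have hTadd : ⇑(T f) =ᵐ[wM r (Set.Icc (-1:ℝ) 1)]
        ⇑((ContinuousLinearMap.adjoint X) (X f)) + ⇑f := by
      rw [hTapp f]; exact Lp.coeFn_add _ _
    rw [hW0T f]
    filter_upwards [hJ0 (T f), hTadd] with x h1 h2
    rw [h1, h2]; rfl
  -- the Krein form of `W₀`
  have hkrein : ∀ f : Pa r, krein0 r ⇑(W0 f) ⇑f = ((‖X f‖^2 + ‖f‖^2 : ℝ) : ℂ) := by
    intro f
    have hW : ⇑(W0 f) =ᵐ[wM r (Set.Icc (-1:ℝ) 1)]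
        fun x => ((Real.sign (r x) : ℝ) : ℂ) * ⇑(T f) x := by
      rw [hW0T f]; exact hJ0 (T f)
    have hW' := (ae_wM_iff hrae).mp hW
    have step1 : krein0 r ⇑(W0 f) ⇑f
        = ∫ x, (|r x| : ℝ) • (⇑(T f) x * (starRingEnd ℂ) (⇑f x))
            ∂(volume.restrict (Set.Icc (-1:ℝ) 1)) := by
      simp only [krein0]
      refine integral_congr_ae ?_
      filter_upwards [hW'] with x hx
      by_cases hr0 : r x = 0
      · simp [hr0]
      · rw [hx hr0]
        have hsgn : Real.sign (r x) * r x = |r x| := by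
          rcases lt_or_gt_of_ne hr0 with h | h
          · rw [Real.sign_of_neg h, abs_of_neg h]; ring
          · rw [Real.sign_of_pos h, abs_of_pos h]; ring
        have hc2 : ((Real.sign (r x) * r x : ℝ) : ℂ) = ((|r x| : ℝ) : ℂ) := by
          exact_mod_cast congrArg (fun t : ℝ => (t : ℂ)) hsgn
        rw [Complex.real_smul]
        push_cast at hc2 ⊢
        linear_combination (⇑(T f) x * (starRingEnd ℂ) (⇑f x)) * hc2
    have hnn : AEMeasurable (fun x => Real.toNNReal |r x|)
        (volume.restrict (Set.Icc (-1:ℝ) 1)) :=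
      measurable_real_toNNReal.comp_aemeasurable
        (continuous_abs.measurable.comp_aemeasurable hrae)
    have hwMd : wM r (Set.Icc (-1:ℝ) 1)
        = (volume.restrict (Set.Icc (-1:ℝ) 1)).withDensity
            (fun x => ((Real.toNNReal |r x| : NNReal) : ENNReal)) := rfl
    have step2a : ∫ x, ⇑(T f) x * (starRingEnd ℂ) (⇑f x) ∂(wM r (Set.Icc (-1:ℝ) 1))
        = ∫ x, (Real.toNNReal |r x|) • (⇑(T f) x * (starRingEnd ℂ) (⇑f x))
            ∂(volume.restrict (Set.Icc (-1:ℝ) 1)) :=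
      integral_withDensity_eq_integral_smul₀ hnn _
    have step2 : ∫ x, ⇑(T f) x * (starRingEnd ℂ) (⇑f x) ∂(wM r (Set.Icc (-1:ℝ) 1))
        = ∫ x, (|r x| : ℝ) • (⇑(T f) x * (starRingEnd ℂ) (⇑f x))
            ∂(volume.restrict (Set.Icc (-1:ℝ) 1)) := by
      rw [step2a]
      refine integral_congr_ae (Eventually.of_forall fun x => ?_)
      simp only [NNReal.smul_def, Real.coe_toNNReal _ (abs_nonneg _)]
    have step3 : ∫ x, ⇑(T f) x * (starRingEnd ℂ) (⇑f x) ∂(wM r (Set.Icc (-1:ℝ) 1))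
        = (starRingEnd ℂ) (inner ℂ (T f) f : ℂ) := by
      rw [L2.inner_def, ← integral_conj]
      refine integral_congr_ae (Eventually.of_forall fun x => ?_)
      simp only [RCLike.inner_apply, map_mul, starRingEnd_apply, star_star]
      exact mul_comm _ _
    rw [step1, ← step2, step3, hTinner f, Complex.conj_ofReal]
  refine ⟨?_, ?_, ?_, ?_, ?_, ?_⟩
  · -- `J₀W₀ = X₀*X₀ + I`
    rw [hW0, ← ContinuousLinearMap.comp_assoc, hJ0J0, ContinuousLinearMap.id_comp]
  · -- nonnegativity
    intro f
    rw [ContinuousLinearMap.comp_apply, ContinuousLinearMap.adjoint_inner_left]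
    constructor
    · rw [← RCLike.re_to_complex]
      exact inner_self_nonneg
    · rw [← RCLike.im_to_complex]
      exact inner_self_im _
  · -- bounded invertibility
    refine ⟨(e.symm : Pa r →L[ℂ] Pa r).comp J0, ?_, ?_⟩
    · ext x
      simp only [ContinuousLinearMap.comp_apply, ContinuousLinearMap.id_apply]
      rw [hW0T _, hTV (J0 x), hJ0J0' x]
    · ext x
      simp only [ContinuousLinearMap.comp_apply, ContinuousLinearMap.id_apply]
      rw [hW0T x, hJ0J0' (T x), hVT x]
  · -- Krein positivity
    intro f hf
    rw [hkrein f]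
    constructor
    · rw [Complex.ofReal_re]
      have h1 : 0 < ‖f‖ := norm_pos_iff.mpr hf
      nlinarith [sq_nonneg ‖X f‖]
    · exact Complex.ofReal_im _
  · -- `W₀ f = J₀ f` a.e. on `1/2 ≤ |x|`
    intro f
    filter_upwards [hW0ae f, hi (X f)] with x h1 h2 hhalf
    rw [h1, h2 hhalf]
    ring
  · -- `W₀ F_max ⊆ F_max`
    intro f hf
    obtain ⟨hfin, g₀, g', hfg, hACg, hIg⟩ := hf
    have hXf : InFmax p r (-1) 1 ⇑(X f) := hii f ⟨hfin, g₀, g', hfg, hACg, hIg⟩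
    obtain ⟨hXin, G₁, G₁', hXG, hACG, hIG⟩ := hXf
    have hG10 : G₁ 0 = g₀ 0 := hiii f g₀ g' hfg hACg hIg G₁ G₁' hXG hACG
    obtain ⟨hAml, hApr⟩ :=
      hiv (X f) ⟨hXin, G₁, G₁', hXG, hACG, hIG⟩
    obtain ⟨hAm2, Am, Am', hAAm, hACAm, hIAm⟩ := hAml
    obtain ⟨hAp2, Ap, Ap', hAAp, hACAp, hIAp⟩ := hApr
    have hkey : Ap 0 + Am 0 = -2 * g₀ 0 := by
      have h := hv (X f) G₁ G₁' hXG hACG hIG Am Am' Ap Ap' hAAm hACAm hAAp hACAp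
      rw [hG10] at h; exact h
    set H : ℝ → ℂ := fun x => if x < 0 then -(Am x + g₀ x) else (Ap x + g₀ x) with hH
    set H' : ℝ → ℂ := fun x => if x < 0 then -(Am' x + g' x) else (Ap' x + g' x) with hH'
    have hsubL : Set.Icc (-1:ℝ) 0 ⊆ Set.Icc (-1:ℝ) 1 :=
      Set.Icc_subset_Icc le_rfl (by norm_num [Set.mem_Icc])
    have hsubR : Set.Icc (0:ℝ) 1 ⊆ Set.Icc (-1:ℝ) 1 :=
      Set.Icc_subset_Icc (by norm_num [Set.mem_Icc]) le_rfl
    -- interval integrability of `H'`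
    have hAm'I : IntegrableOn Am' (Set.Ioc (-1:ℝ) 0) := hACAm.1.1
    have hAp'I : IntegrableOn Ap' (Set.Ioc (0:ℝ) 1) := hACAp.1.1
    have hg'L : IntegrableOn g' (Set.Ioc (-1:ℝ) 0) :=
      (II_sub hACg.1 (by norm_num [Set.mem_Icc]) (by norm_num [Set.mem_Icc]) (by norm_num [Set.mem_Icc])).1
    have hg'R : IntegrableOn g' (Set.Ioc (0:ℝ) 1) :=
      (II_sub hACg.1 (by norm_num [Set.mem_Icc]) (by norm_num [Set.mem_Icc]) (by norm_num [Set.mem_Icc])).1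
    have hH'L : IntegrableOn H' (Set.Ioc (-1:ℝ) 0) := by
      refine ((hAm'I.add hg'L).neg).congr ?_
      filter_upwards [ae_restrict_mem measurableSet_Ioc, ae_ne_zero] with x hx hne
      have hlt : x < 0 := lt_of_le_of_ne hx.2 hne
      simp [hH', if_pos hlt]
    have hH'R : IntegrableOn H' (Set.Ioc (0:ℝ) 1) := by
      refine (hAp'I.add hg'R).congr ?_
      filter_upwards [ae_restrict_mem measurableSet_Ioc] with x hx
      simp [hH', not_lt.mpr hx.1.le]
    have hIIL : IntervalIntegrable H' volume (-1) 0 :=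
      (intervalIntegrable_iff_integrableOn_Ioc_of_le (by norm_num [Set.mem_Icc])).mpr hH'L
    have hIIR : IntervalIntegrable H' volume 0 1 :=
      (intervalIntegrable_iff_integrableOn_Ioc_of_le (by norm_num [Set.mem_Icc])).mpr hH'R
    -- the FTC property for `H`
    have hintL : ∀ x ∈ Set.Icc (-1:ℝ) 0,
        ∫ t in (-1:ℝ)..x, H' t = ∫ t in (-1:ℝ)..x, -(Am' t + g' t) := by
      intro x hx
      refine intervalIntegral.integral_congr_ae ?_
      filter_upwards [ae_ne_zero'] with t ht hmem
      rw [Set.uIoc_of_le hx.1] at hmem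
      have hlt : t < 0 := lt_of_le_of_ne (hmem.2.trans hx.2) ht
      simp [hH', if_pos hlt]
    have hFTCL : ∀ x ∈ Set.Icc (-1:ℝ) 0, H x = H (-1) + ∫ t in (-1:ℝ)..x, H' t := by
      intro x hx
      have hAmx := hACAm.2 x hx
      have hgx := hACg.2 x ⟨hx.1, hx.2.trans (by norm_num [Set.mem_Icc])⟩
      have hAmII : IntervalIntegrable Am' volume (-1) x :=
        II_sub hACAm.1 (by norm_num [Set.mem_Icc]) (by norm_num [Set.mem_Icc]) hx
      have hgII : IntervalIntegrable g' volume (-1) x :=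
        II_sub hACg.1 (by norm_num [Set.mem_Icc]) (by norm_num [Set.mem_Icc]) ⟨hx.1, hx.2.trans (by norm_num [Set.mem_Icc])⟩
      have hsplit : ∫ t in (-1:ℝ)..x, -(Am' t + g' t)
          = -((∫ t in (-1:ℝ)..x, Am' t) + ∫ t in (-1:ℝ)..x, g' t) := by
        rw [intervalIntegral.integral_neg, intervalIntegral.integral_add hAmII hgII]
      rw [hintL x hx, hsplit]
      rcases lt_or_eq_of_le hx.2 with hxlt | hxeq
      · simp only [hH, if_pos hxlt, if_pos (show (-1:ℝ) < 0 by norm_num)]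
        rw [hAmx, hgx]; ring
      · subst hxeq
        simp only [hH, lt_irrefl, if_false, if_pos (show (-1:ℝ) < 0 by norm_num)]
        have h1 : Ap 0 + g₀ 0 = -(Am 0 + g₀ 0) := by linear_combination hkey
        rw [h1, hAmx, hgx]; ring
    have hFTCR : ∀ x ∈ Set.Ioc (0:ℝ) 1, H x = H 0 + ∫ t in (0:ℝ)..x, H' t := by
      intro x hx
      have hApx := hACAp.2 x ⟨hx.1.le, hx.2⟩
      have hgx : g₀ x = g₀ 0 + ∫ t in (0:ℝ)..x, g' t := by
        have h1 := hACg.2 x ⟨by linarith [hx.1], hx.2⟩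
        have h0 := hACg.2 0 (by norm_num [Set.mem_Icc])
        have hadd : (∫ t in (-1:ℝ)..0, g' t) + ∫ t in (0:ℝ)..x, g' t
            = ∫ t in (-1:ℝ)..x, g' t :=
          intervalIntegral.integral_add_adjacent_intervals
            (II_sub hACg.1 (by norm_num) (by norm_num [Set.mem_Icc])
              (by norm_num [Set.mem_Icc]))
            (II_sub hACg.1 (by norm_num) (by norm_num [Set.mem_Icc])
              ⟨by linarith [hx.1], hx.2⟩)
        rw [h1, h0, ← hadd]; ring
      have hint : ∫ t in (0:ℝ)..x, H' t = ∫ t in (0:ℝ)..x, (Ap' t + g' t) := by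
        refine intervalIntegral.integral_congr fun t ht => ?_
        rw [Set.uIcc_of_le hx.1.le] at ht
        simp [hH', not_lt.mpr ht.1]
      have hApII : IntervalIntegrable Ap' volume 0 x :=
        II_sub hACAp.1 (by norm_num [Set.mem_Icc]) (by norm_num [Set.mem_Icc]) ⟨hx.1.le, hx.2⟩
      have hgII : IntervalIntegrable g' volume 0 x :=
        II_sub hACg.1 (by norm_num [Set.mem_Icc]) (by norm_num [Set.mem_Icc]) ⟨by linarith [hx.1], hx.2⟩
      simp only [hH, if_neg (not_lt.mpr hx.1.le), if_neg (lt_irrefl (0:ℝ))]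
      rw [hApx, hgx, hint, intervalIntegral.integral_add hApII hgII]
      ring
    have hACH : ACOn H H' (-1) 1 := by
      refine ⟨hIIL.trans hIIR, fun x hx => ?_⟩
      rcases le_or_gt x 0 with hx0 | hx0
      · exact hFTCL x ⟨hx.1, hx0⟩
      · have h0 := hFTCL 0 (by norm_num [Set.mem_Icc])
        have hR := hFTCR x ⟨hx0, hx.2⟩
        have hadd : (∫ t in (-1:ℝ)..0, H' t) + ∫ t in (0:ℝ)..x, H' t
            = ∫ t in (-1:ℝ)..x, H' t :=
          intervalIntegral.integral_add_adjacent_intervals hIIL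
            (II_sub hIIR (by norm_num) (by norm_num [Set.mem_Icc]) ⟨hx0.le, hx.2⟩)
        rw [hR, h0, ← hadd]; ring
    -- `W₀ f =ᵐ H`
    have hfgL : ⇑f =ᵐ[wM r (Set.Icc (-1:ℝ) 0)] g₀ := Eventually.filter_mono (ae_mono (wM_mono hsubL)) hfg
    have hfgR : ⇑f =ᵐ[wM r (Set.Icc (0:ℝ) 1)] g₀ := Eventually.filter_mono (ae_mono (wM_mono hsubR)) hfg
    have hxr : ∀ᵐ x ∂(volume.restrict (Set.Icc (-1:ℝ) 1)), 0 < x * r x :=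
      hc.2.2.2.mono fun x h => h.2
    have hxrL : ∀ᵐ x ∂wM r (Set.Icc (-1:ℝ) 0), 0 < x * r x :=
      ae_wM_of_ae (Eventually.filter_mono (ae_mono (Measure.restrict_mono hsubL le_rfl)) hxr)
    have hxrR : ∀ᵐ x ∂wM r (Set.Icc (0:ℝ) 1), 0 < x * r x :=
      ae_wM_of_ae (Eventually.filter_mono (ae_mono (Measure.restrict_mono hsubR le_rfl)) hxr)
    have hmemL : ∀ᵐ x ∂wM r (Set.Icc (-1:ℝ) 0), x ∈ Set.Icc (-1:ℝ) 0 :=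
      ae_wM_of_ae (ae_restrict_mem measurableSet_Icc)
    have hmemR : ∀ᵐ x ∂wM r (Set.Icc (0:ℝ) 1), x ∈ Set.Icc (0:ℝ) 1 :=
      ae_wM_of_ae (ae_restrict_mem measurableSet_Icc)
    have hneL : ∀ᵐ x ∂wM r (Set.Icc (-1:ℝ) 0), x ≠ (0:ℝ) := ae_wM_of_ae ae_ne_zero
    have hWH : ⇑(W0 f) =ᵐ[wM r (Set.Icc (-1:ℝ) 1)] H := by
      refine (hW0ae f).trans (ae_glue ?_ ?_)
      · filter_upwards [hmemL, hxrL, hneL, hAAm, hfgL] with x hx hxr0 hne hAx hfx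
        have hxlt : x < 0 := lt_of_le_of_ne hx.2 hne
        have hrneg : r x < 0 := by
          rcases mul_pos_iff.mp hxr0 with ⟨h1, _⟩ | ⟨_, h2⟩
          · exact absurd h1 (not_lt.mpr hxlt.le)
          · exact h2
        simp only [hH]
        rw [if_pos hxlt, Real.sign_of_neg hrneg, hAx, hfx]
        push_cast; ring
      · filter_upwards [hmemR, hxrR, hAAp, hfgR] with x hx hxr0 hAx hfx
        have hxpos : 0 < x := by
          rcases mul_pos_iff.mp hxr0 with ⟨h1, _⟩ | ⟨h1, _⟩
          · exact h1
          · exact absurd h1 (not_lt.mpr hx.1)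
        have hrpos : 0 < r x := by
          rcases mul_pos_iff.mp hxr0 with ⟨_, h2⟩ | ⟨h1, _⟩
          · exact h2
          · exact absurd h1 (not_lt.mpr hx.1)
        simp only [hH]
        rw [if_neg (not_lt.mpr hxpos.le), Real.sign_of_pos hrpos, hAx, hfx]
        push_cast; ring
    -- integrability of `p ‖H'‖²`
    have hIccIocL : volume.restrict (Set.Icc (-1:ℝ) 0)
        = volume.restrict (Set.Ioc (-1:ℝ) 0) :=
      (Measure.restrict_congr_set Ioc_ae_eq_Icc).symm
    have hIccIocR : volume.restrict (Set.Icc (0:ℝ) 1)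
        = volume.restrict (Set.Ioc (0:ℝ) 1) :=
      (Measure.restrict_congr_set Ioc_ae_eq_Icc).symm
    have hpposL : ∀ᵐ x ∂(volume.restrict (Set.Icc (-1:ℝ) 0)), 0 < p x :=
      (Eventually.filter_mono (ae_mono (Measure.restrict_mono hsubL le_rfl)) hc.2.2.2).mono fun x h => h.1
    have hpposR : ∀ᵐ x ∂(volume.restrict (Set.Icc (0:ℝ) 1)), 0 < p x :=
      (Eventually.filter_mono (ae_mono (Measure.restrict_mono hsubR le_rfl)) hc.2.2.2).mono fun x h => h.1
    have hpinv : AEMeasurable (fun x => 1 / p x) (volume.restrict (Set.Icc (-1:ℝ) 1)) :=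
      hc.1.aestronglyMeasurable.aemeasurable
    have hpaeL : AEMeasurable p (volume.restrict (Set.Icc (-1:ℝ) 0)) := by
      have h1 : AEMeasurable (fun x => (1 / p x)⁻¹)
          (volume.restrict (Set.Icc (-1:ℝ) 0)) :=
        (hpinv.mono_measure (Measure.restrict_mono hsubL le_rfl)).inv
      refine (aemeasurable_congr ?_).mp h1
      filter_upwards [hpposL] with x hx
      rw [one_div, inv_inv]
    have hpaeR : AEMeasurable p (volume.restrict (Set.Icc (0:ℝ) 1)) := by
      have h1 : AEMeasurable (fun x => (1 / p x)⁻¹)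
          (volume.restrict (Set.Icc (0:ℝ) 1)) :=
        (hpinv.mono_measure (Measure.restrict_mono hsubR le_rfl)).inv
      refine (aemeasurable_congr ?_).mp h1
      filter_upwards [hpposR] with x hx
      rw [one_div, inv_inv]
    have hintHL : IntegrableOn (fun x => p x * ‖H' x‖ ^ 2) (Set.Icc (-1:ℝ) 0) := by
      have hAm'm : AEStronglyMeasurable Am' (volume.restrict (Set.Icc (-1:ℝ) 0)) := by
        rw [hIccIocL]; exact hAm'I.aestronglyMeasurable
      have hg'm : AEStronglyMeasurable g' (volume.restrict (Set.Icc (-1:ℝ) 0)) := by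
        rw [hIccIocL]; exact hg'L.aestronglyMeasurable
      have hmeas : AEStronglyMeasurable (fun x => p x * ‖Am' x + g' x‖ ^ 2)
          (volume.restrict (Set.Icc (-1:ℝ) 0)) :=
        (hpaeL.mul (((hAm'm.add hg'm).norm.aemeasurable).pow_const 2)).aestronglyMeasurable
      have hbnd : IntegrableOn
          (fun x => 2 * (p x * ‖Am' x‖ ^ 2) + 2 * (p x * ‖g' x‖ ^ 2))
          (Set.Icc (-1:ℝ) 0) :=
        (hIAm.const_mul 2).add ((hIg.mono_set hsubL).const_mul 2)
      have hcore : IntegrableOn (fun x => p x * ‖Am' x + g' x‖ ^ 2)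
          (Set.Icc (-1:ℝ) 0) := by
        refine Integrable.mono' hbnd hmeas ?_
        filter_upwards [hpposL] with x hx
        rw [Real.norm_eq_abs, abs_of_nonneg (by positivity)]
        have h1 : ‖Am' x + g' x‖ ≤ ‖Am' x‖ + ‖g' x‖ := norm_add_le _ _
        have h2 : ‖Am' x + g' x‖ ^ 2 ≤ 2 * ‖Am' x‖ ^ 2 + 2 * ‖g' x‖ ^ 2 := by
          nlinarith [norm_nonneg (Am' x + g' x), norm_nonneg (Am' x),
            norm_nonneg (g' x), sq_nonneg (‖Am' x‖ - ‖g' x‖)]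
        nlinarith [mul_le_mul_of_nonneg_left h2 hx.le]
      refine hcore.congr ?_
      filter_upwards [ae_restrict_mem measurableSet_Icc, ae_ne_zero] with x hx hne
      have hlt : x < 0 := lt_of_le_of_ne hx.2 hne
      have hx' : H' x = -(Am' x + g' x) := by simp [hH', if_pos hlt]
      rw [hx', norm_neg]
    have hintHR : IntegrableOn (fun x => p x * ‖H' x‖ ^ 2) (Set.Icc (0:ℝ) 1) := by
      have hAp'm : AEStronglyMeasurable Ap' (volume.restrict (Set.Icc (0:ℝ) 1)) := by
        rw [hIccIocR]; exact hAp'I.aestronglyMeasurable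
      have hg'm : AEStronglyMeasurable g' (volume.restrict (Set.Icc (0:ℝ) 1)) := by
        rw [hIccIocR]; exact hg'R.aestronglyMeasurable
      have hmeas : AEStronglyMeasurable (fun x => p x * ‖Ap' x + g' x‖ ^ 2)
          (volume.restrict (Set.Icc (0:ℝ) 1)) :=
        (hpaeR.mul (((hAp'm.add hg'm).norm.aemeasurable).pow_const 2)).aestronglyMeasurable
      have hbnd : IntegrableOn
          (fun x => 2 * (p x * ‖Ap' x‖ ^ 2) + 2 * (p x * ‖g' x‖ ^ 2))
          (Set.Icc (0:ℝ) 1) :=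
        (hIAp.const_mul 2).add ((hIg.mono_set hsubR).const_mul 2)
      have hcore : IntegrableOn (fun x => p x * ‖Ap' x + g' x‖ ^ 2)
          (Set.Icc (0:ℝ) 1) := by
        refine Integrable.mono' hbnd hmeas ?_
        filter_upwards [hpposR] with x hx
        rw [Real.norm_eq_abs, abs_of_nonneg (by positivity)]
        have h1 : ‖Ap' x + g' x‖ ≤ ‖Ap' x‖ + ‖g' x‖ := norm_add_le _ _
        have h2 : ‖Ap' x + g' x‖ ^ 2 ≤ 2 * ‖Ap' x‖ ^ 2 + 2 * ‖g' x‖ ^ 2 := by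
          nlinarith [norm_nonneg (Ap' x + g' x), norm_nonneg (Ap' x),
            norm_nonneg (g' x), sq_nonneg (‖Ap' x‖ - ‖g' x‖)]
        nlinarith [mul_le_mul_of_nonneg_left h2 hx.le]
      refine hcore.congr ?_
      filter_upwards [ae_restrict_mem measurableSet_Icc] with x hx
      simp [hH', not_lt.mpr hx.1]
    have hintH : IntegrableOn (fun x => p x * ‖H' x‖ ^ 2) (Set.Icc (-1:ℝ) 1) := by
      rw [show Set.Icc (-1:ℝ) 1 = Set.Icc (-1:ℝ) 0 ∪ Set.Icc 0 1 from
        (Set.Icc_union_Icc_eq_Icc (by norm_num [Set.mem_Icc]) (by norm_num [Set.mem_Icc])).symm]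
      exact hintHL.union hintHR
    exact ⟨Lp.memLp _, H, H', hWH, hACH, hintH⟩


end SL
end
end
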